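/- arXiv:2410.20385 — 3 statements merged into one kernel-verified Lean document; each statement's English description precedes it below -/
import Mathlib

section
/- For a real number a with 0 < a ≤ 1 and an integer n ≥ 0, the Hurwitz zeta function satisfies ζ(a, -n) = -B_{n+1}(a)/(n+1), where ζ(a,s) is the analytic continuation of Σ_{m≥0} 1/(m+a)^s. -/
open Complex Real HurwitzZeta

namespace HurwitzAux

open Set

/-- Derivative of `x ↦ (x:ℂ)^c` for real `x > 0`. -/
lemma hasDerivAt_cpow_real {x : ℝ} (hx : 0 < x) {c : ℂ} (hc : c ≠ 0) :
    HasDerivAt (fun y : ℝ => (y : ℂ) ^ c) (c * (x : ℂ) ^ (c - 1)) x := by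
  have hr : c - 1 ≠ -1 := by
    intro h
    apply hc
    linear_combination h
  have h := _root_.hasDerivAt_ofReal_cpow_const' hx.ne' hr
  rw [sub_add_cancel] at h
  have h2 := h.const_mul c
  have hfun : (fun y : ℝ => (y : ℂ) ^ c) = fun y : ℝ => c * ((y : ℂ) ^ c / c) := by
    funext y
    rw [mul_comm, div_mul_cancel₀ _ hc]
  rw [hfun]
  exact h2

/-- The error term in the second-order Euler–Maclaurin comparison. -/
noncomputable def hterm (a : ℝ) (s : ℂ) (n : ℕ) : ℂ :=
  (a : ℂ) * ((n + 1 + a : ℝ) : ℂ) ^ (-s) + (1 - (a : ℂ)) * ((n + 2 + a : ℝ) : ℂ) ^ (-s)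
    - ((n + 2 : ℝ) : ℂ) ^ (-s)

lemma hterm_zero (a : ℝ) (n : ℕ) : hterm a 0 n = 0 := by
  simp only [hterm, neg_zero, cpow_zero]
  ring

lemma hterm_bound (a : ℝ) (ha0 : 0 < a) (ha1 : a ≤ 1) {s : ℂ} (hs : -1 < s.re) (n : ℕ) :
    ‖hterm a s n‖ ≤ ‖s‖ * ‖s + 1‖ * ((n + 1 : ℝ)) ^ (-s.re - 2) := by
  rcases eq_or_ne s 0 with rfl | hs0
  · rw [hterm_zero]
    simp
  have hs1 : s ≠ -1 := by
    intro h
    rw [h] at hs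
    norm_num at hs
  have hsneg : -s ≠ 0 := neg_ne_zero.mpr hs0
  have hsneg1 : -s - 1 ≠ 0 := by
    intro h
    apply hs1
    linear_combination -h
  set M : ℝ := ‖s‖ * ‖s + 1‖ * ((n + 1 : ℝ)) ^ (-s.re - 2) with hM
  set g' : ℝ → ℂ := fun x => (-s) * (x : ℂ) ^ (-s - 1) with hg'
  have hIpos : ∀ x ∈ Icc (n + 1 + a : ℝ) (n + 2 + a : ℝ), (n + 1 : ℝ) ≤ x ∧ (0 : ℝ) < x := by
    intro x hx
    have h1 := hx.1
    constructor
    · linarith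
    · have : (0:ℝ) < n + 1 + a := by positivity
      linarith
  -- the second derivative bound
  have hg'' : ∀ x ∈ Icc (n + 1 + a : ℝ) (n + 2 + a : ℝ),
      HasDerivWithinAt g' ((-s) * ((-s - 1) * (x : ℂ) ^ (-s - 1 - 1))) (Icc (n + 1 + a : ℝ) (n + 2 + a : ℝ)) x := by
    intro x hx
    exact ((hasDerivAt_cpow_real (hIpos x hx).2 hsneg1).const_mul (-s)).hasDerivWithinAt
  have hg''_bound : ∀ x ∈ Icc (n + 1 + a : ℝ) (n + 2 + a : ℝ),
      ‖(-s) * ((-s - 1) * (x : ℂ) ^ (-s - 1 - 1))‖ ≤ M := by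
    intro x hx
    rw [norm_mul, norm_mul, norm_neg]
    have h1 : ‖-s - 1‖ = ‖s + 1‖ := by
      rw [show -s - 1 = -(s + 1) by ring, norm_neg]
    rw [h1]
    have h2 : ‖(x : ℂ) ^ (-s - 1 - 1)‖ = x ^ ((-s - 1 - 1).re) := by
      rw [Complex.norm_cpow_eq_rpow_re_of_pos (hIpos x hx).2]
    rw [h2]
    have h3 : ((-s - 1 - 1).re) = -s.re - 2 := by
      simp
      ring
    rw [h3, hM]
    have h4 : x ^ (-s.re - 2) ≤ ((n + 1 : ℝ)) ^ (-s.re - 2) := by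
      apply Real.rpow_le_rpow_of_nonpos (by positivity) (hIpos x hx).1 (by linarith)
    calc ‖s‖ * (‖s + 1‖ * x ^ (-s.re - 2))
        = ‖s‖ * ‖s + 1‖ * (x ^ (-s.re - 2)) := by ring
      _ ≤ ‖s‖ * ‖s + 1‖ * ((n + 1 : ℝ)) ^ (-s.re - 2) :=
          mul_le_mul_of_nonneg_left h4 (by positivity)
  -- first MVT: g' is M-Lipschitz on the interval
  have hg'lip : ∀ x ∈ Icc (n + 1 + a : ℝ) (n + 2 + a : ℝ), ∀ y ∈ Icc (n + 1 + a : ℝ) (n + 2 + a : ℝ),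
      ‖g' y - g' x‖ ≤ M * ‖y - x‖ :=
    fun x hx y hy => (convex_Icc _ _).norm_image_sub_le_of_norm_hasDerivWithin_le hg'' hg''_bound
      hx hy
  have hmI : (n + 2 : ℝ) ∈ Icc (n + 1 + a : ℝ) (n + 2 + a : ℝ) := by
    rw [Set.mem_Icc]
    constructor <;> linarith
  -- φ and its derivative
  set gm : ℂ := g' (n + 2 : ℝ) with hgm
  set φ : ℝ → ℂ := fun x => (x : ℂ) ^ (-s) - ((x : ℂ) - ((n + 2 : ℝ) : ℂ)) * gm with hφ
  have hφderiv : ∀ x ∈ Icc (n + 1 + a : ℝ) (n + 2 + a : ℝ),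
      HasDerivWithinAt φ (g' x - gm) (Icc (n + 1 + a : ℝ) (n + 2 + a : ℝ)) x := by
    intro x hx
    have d1 : HasDerivAt (fun y : ℝ => (y : ℂ) ^ (-s)) (g' x) x := by
      have := hasDerivAt_cpow_real (hIpos x hx).2 hsneg
      rw [hg']
      convert this using 2
    have d2 : HasDerivAt (fun y : ℝ => ((y : ℂ) - ((n + 2 : ℝ) : ℂ)) * gm) gm x := by
      have : HasDerivAt (fun y : ℝ => (y : ℂ)) 1 x := Complex.ofRealCLM.hasDerivAt
      have := ((this.sub_const ((n + 2 : ℝ) : ℂ)).mul_const gm)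
      simpa using this
    exact (d1.sub d2).hasDerivWithinAt
  have hφbound : ∀ x ∈ Icc (n + 1 + a : ℝ) (n + 2 + a : ℝ), ‖g' x - gm‖ ≤ M := by
    intro x hx
    refine le_trans (hg'lip _ hmI _ hx) ?_
    have hxm : ‖x - (n + 2 : ℝ)‖ ≤ 1 := by
      rw [Real.norm_eq_abs, abs_le]
      have h1 := hx.1
      have h2 := hx.2
      constructor <;> linarith
    have hM0 : 0 ≤ M := by
      rw [hM]
      positivity
    nlinarith [norm_nonneg (x - (n+2:ℝ))]
  -- second MVT: φ is M-Lipschitz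
  have hφlip : ∀ x ∈ Icc (n + 1 + a : ℝ) (n + 2 + a : ℝ),
      ‖φ x - φ (n + 2 : ℝ)‖ ≤ M :=
    by
    intro x hx
    have := (convex_Icc _ _).norm_image_sub_le_of_norm_hasDerivWithin_le hφderiv hφbound
      hmI hx
    refine le_trans this ?_
    have hxm : ‖x - (n + 2 : ℝ)‖ ≤ 1 := by
      rw [Real.norm_eq_abs, abs_le]
      have h1 := hx.1
      have h2 := hx.2
      constructor <;> linarith
    have hM0 : 0 ≤ M := by rw [hM]; positivity
    nlinarith [norm_nonneg (x - (n+2:ℝ))]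
  -- decompose hterm
  have hx₁I : (n + 1 + a : ℝ) ∈ Icc (n + 1 + a : ℝ) (n + 2 + a : ℝ) := by
    rw [Set.mem_Icc]
    constructor <;> linarith
  have hx₂I : (n + 2 + a : ℝ) ∈ Icc (n + 1 + a : ℝ) (n + 2 + a : ℝ) := by
    rw [Set.mem_Icc]
    constructor <;> linarith
  have key : hterm a s n = (a : ℂ) * (φ (n + 1 + a : ℝ) - φ (n + 2 : ℝ))
      + (1 - (a : ℂ)) * (φ (n + 2 + a : ℝ) - φ (n + 2 : ℝ)) := by
    rw [hφ, hterm]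
    have e1 : ((n + 1 + a : ℝ) : ℂ) - ((n + 2 : ℝ) : ℂ) = (a : ℂ) - 1 := by
      push_cast
      ring
    have e2 : ((n + 2 + a : ℝ) : ℂ) - ((n + 2 : ℝ) : ℂ) = (a : ℂ) := by
      push_cast
      ring
    simp only [e1, e2, sub_self, zero_mul, sub_zero]
    ring
  rw [key]
  have b1 := hφlip _ hx₁I
  have b2 := hφlip _ hx₂I
  refine le_trans (norm_add_le _ _) ?_
  rw [norm_mul, norm_mul]
  have na : ‖(a : ℂ)‖ = a := by
    rw [Complex.norm_real, Real.norm_eq_abs, abs_of_pos ha0]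
  have na2 : ‖1 - (a : ℂ)‖ = 1 - a := by
    rw [show (1 : ℂ) - a = ((1 - a : ℝ) : ℂ) by push_cast; ring, Complex.norm_real,
      Real.norm_eq_abs]
    exact abs_of_nonneg (by linarith)
  rw [na, na2]
  nlinarith [norm_nonneg (φ (n + 1 + a : ℝ) - φ (n + 2 : ℝ)),
    norm_nonneg (φ (n + 2 + a : ℝ) - φ (n + 2 : ℝ))]

lemma hasSum_hterm (a : ℝ) (ha0 : 0 < a) (ha1 : a ≤ 1) {s : ℂ} (hs : 1 < s.re) :
    HasSum (hterm a s)
      (hurwitzZeta (a : UnitAddCircle) s - riemannZeta s - (a : ℂ) ^ (-s) + 1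
        - (1 - (a : ℂ)) * ((1 + a : ℝ) : ℂ) ^ (-s)) := by
  set b : ℕ → ℂ := fun n => (((n : ℝ) + a : ℝ) : ℂ) ^ (-s) with hbdef
  set z : ℕ → ℂ := fun n => (((n : ℝ) + 1 : ℝ) : ℂ) ^ (-s) with hzdef
  have hb : HasSum b (hurwitzZeta (a : UnitAddCircle) s) := by
    have h := hasSum_hurwitzZeta_of_one_lt_re (Set.mem_Icc.mpr ⟨ha0.le, ha1⟩) hs
    refine h.congr_fun fun n => ?_
    have e : (((n : ℝ) + a : ℝ) : ℂ) = (n : ℂ) + a := by push_cast; ring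
    rw [hbdef]
    simp only []
    rw [e, cpow_neg, one_div]
  have hz : HasSum z (riemannZeta s) := by
    have h := hasSum_hurwitzZeta_of_one_lt_re (a := (1 : ℝ))
      (Set.mem_Icc.mpr ⟨zero_le_one, le_refl 1⟩) hs
    rw [show ((1 : ℝ) : UnitAddCircle) = 0 from AddCircle.coe_period (1 : ℝ), hurwitzZeta_zero] at h
    refine h.congr_fun fun n => ?_
    have e : (((n : ℝ) + 1 : ℝ) : ℂ) = (n : ℂ) + 1 := by push_cast; ring
    rw [hzdef]
    simp only []
    rw [e, cpow_neg, one_div]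
    norm_num
  have H1 : HasSum (fun n => b (n + 1))
      (hurwitzZeta (a : UnitAddCircle) s - ∑ i ∈ Finset.range 1, b i) :=
    (hasSum_nat_add_iff' 1).mpr hb
  have H2 : HasSum (fun n => b (n + 2))
      (hurwitzZeta (a : UnitAddCircle) s - ∑ i ∈ Finset.range 2, b i) :=
    (hasSum_nat_add_iff' 2).mpr hb
  have Hz : HasSum (fun n => z (n + 1)) (riemannZeta s - ∑ i ∈ Finset.range 1, z i) :=
    (hasSum_nat_add_iff' 1).mpr hz
  have combo := ((H1.mul_left ((a : ℂ))).add (H2.mul_left (1 - (a : ℂ)))).sub Hz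
  have efun : (fun n : ℕ => (a : ℂ) * b (n + 1) + (1 - (a : ℂ)) * b (n + 2) - z (n + 1))
      = hterm a s := by
    funext n
    rw [hbdef, hzdef]
    simp only []
    have e1 : (((n + 1 : ℕ) : ℝ) + a : ℝ) = ((n : ℝ) + 1 + a) := by push_cast; ring
    have e2 : (((n + 2 : ℕ) : ℝ) + a : ℝ) = ((n : ℝ) + 2 + a) := by push_cast; ring
    have e3 : (((n + 1 : ℕ) : ℝ) + 1 : ℝ) = ((n : ℝ) + 2) := by push_cast; ring
    rw [e1, e2, e3, hterm]
  rw [efun] at combo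
  convert combo using 1
  · rfl
  have eb0 : b 0 = (a : ℂ) ^ (-s) := by
    rw [hbdef]; simp only []; norm_num
  have eb1 : b 1 = ((1 + a : ℝ) : ℂ) ^ (-s) := by
    rw [hbdef]; simp only []; norm_num
  have ez0 : z 0 = 1 := by
    rw [hzdef]; simp only []; norm_num
  simp only [Finset.sum_range_succ, Finset.sum_range_one, eb0, eb1, ez0]
  ring

lemma hurwitzZeta_zero_eq (a : ℝ) (ha0 : 0 < a) (ha1 : a ≤ 1) :
    hurwitzZeta (a : UnitAddCircle) 0 = 1 / 2 - a := by
  have hane : ((a : ℝ) : ℂ) ≠ 0 := ofReal_ne_zero.mpr ha0.ne'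
  have h1ane : (((1 + a : ℝ)) : ℂ) ≠ 0 := ofReal_ne_zero.mpr (by positivity)
  set Ω : Set ℂ := {z : ℂ | -1 < z.re} with hΩ
  have hΩo : IsOpen Ω := isOpen_lt continuous_const continuous_re
  have hΩc : IsPreconnected Ω := (convex_halfSpace_re_gt (-1)).isPreconnected
  set F₁ : ℂ → ℂ := fun s => hurwitzZeta (a : UnitAddCircle) s - riemannZeta s with hF₁
  set F₂ : ℂ → ℂ := fun s =>
    (a : ℂ) ^ (-s) - 1 + (1 - (a : ℂ)) * ((1 + a : ℝ) : ℂ) ^ (-s) + ∑' n, hterm a s n with hF₂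
  have hd1 : Differentiable ℂ F₁ := by
    have h := differentiable_hurwitzZeta_sub_hurwitzZeta (a : UnitAddCircle) 0
    simp only [hurwitzZeta_zero] at h
    exact h
  have hdsum : DifferentiableOn ℂ (fun s => ∑' n, hterm a s n) Ω := by
    intro s₀ hs₀
    have hre : -1 < s₀.re := hs₀
    set ε : ℝ := (s₀.re + 1) / 2 with hε
    have hε0 : 0 < ε := by rw [hε]; linarith
    have hσ : -1 < s₀.re - ε := by rw [hε]; linarith
    have hwre : ∀ w ∈ Metric.ball s₀ ε, s₀.re - ε < w.re := by
      intro w hw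
      rw [Metric.mem_ball, dist_eq_norm] at hw
      have h1 : |(w - s₀).re| ≤ ‖w - s₀‖ := Complex.abs_re_le_norm _
      rw [Complex.sub_re] at h1
      have h2 := (abs_le.mp h1).1
      linarith
    have hball : Metric.ball s₀ ε ⊆ Ω := by
      intro w hw
      have := hwre w hw
      show -1 < w.re
      linarith
    have hdiff : DifferentiableOn ℂ (fun s => ∑' n, hterm a s n) (Metric.ball s₀ ε) := by
      apply differentiableOn_tsum_of_summable_norm
        (u := fun n : ℕ => ((‖s₀‖ + ε) * (‖s₀‖ + 1 + ε)) * ((n + 1 : ℝ)) ^ (-(s₀.re - ε) - 2))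
      · apply Summable.mul_left
        have hp : (-(s₀.re - ε) - 2 : ℝ) < -1 := by linarith
        have h := Real.summable_nat_rpow.mpr hp
        have h2 := (summable_nat_add_iff (f := fun n : ℕ => ((n : ℝ)) ^ (-(s₀.re - ε) - 2)) 1).mpr h
        refine h2.congr fun n => ?_
        have e : ((n + 1 : ℕ) : ℝ) = (n : ℝ) + 1 := by push_cast; ring
        rw [e]
      · intro n
        apply Differentiable.differentiableOn
        have hb1 : ((((n : ℝ) + 1 + a : ℝ)) : ℂ) ≠ 0 := ofReal_ne_zero.mpr (by positivity)
        have hb2 : ((((n : ℝ) + 2 + a : ℝ)) : ℂ) ≠ 0 := ofReal_ne_zero.mpr (by positivity)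
        have hb3 : ((((n : ℝ) + 2 : ℝ)) : ℂ) ≠ 0 := ofReal_ne_zero.mpr (by positivity)
        unfold hterm
        have hneg : Differentiable ℂ (fun s : ℂ => -s) := differentiable_id.neg
        exact (((hneg.const_cpow (Or.inl hb1)).const_mul _).add
          ((hneg.const_cpow (Or.inl hb2)).const_mul _)).sub (hneg.const_cpow (Or.inl hb3))
      · exact Metric.isOpen_ball
      · intro n w hw
        have hwlow := hwre w hw
        have hw1 : -1 < w.re := lt_trans hσ hwlow
        refine le_trans (hterm_bound a ha0 ha1 hw1 n) ?_
        rw [Metric.mem_ball, dist_eq_norm] at hw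
        have hnw : ‖w‖ ≤ ‖s₀‖ + ε := by
          have := norm_sub_norm_le w s₀
          linarith [this.trans hw.le]
        have hnw2 : ‖w + 1‖ ≤ ‖s₀‖ + 1 + ε := by
          have := norm_add_le w 1
          rw [norm_one] at this
          linarith
        have hw3 : ((n + 1 : ℝ)) ^ (-w.re - 2) ≤ ((n + 1 : ℝ)) ^ (-(s₀.re - ε) - 2) := by
          apply Real.rpow_le_rpow_of_exponent_le
          · have : (0:ℝ) ≤ n := Nat.cast_nonneg n
            linarith
          · linarith
        exact mul_le_mul (mul_le_mul hnw hnw2 (norm_nonneg _) (by positivity))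
          hw3 (Real.rpow_nonneg (by positivity) _) (by positivity)
    exact ((hdiff.differentiableAt (Metric.isOpen_ball.mem_nhds
      (Metric.mem_ball_self hε0))).differentiableWithinAt)
  have hd2 : DifferentiableOn ℂ F₂ Ω := by
    have hneg : Differentiable ℂ (fun s : ℂ => -s) := differentiable_id.neg
    have d1 : Differentiable ℂ (fun s : ℂ => (a : ℂ) ^ (-s) - 1
        + (1 - (a : ℂ)) * ((1 + a : ℝ) : ℂ) ^ (-s)) :=
      ((hneg.const_cpow (Or.inl hane)).sub_const 1).add
        ((hneg.const_cpow (Or.inl h1ane)).const_mul _)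
    exact d1.differentiableOn.add hdsum
  have heq : EqOn F₁ F₂ Ω := by
    have hF₁a : AnalyticOnNhd ℂ F₁ Ω := hd1.differentiableOn.analyticOnNhd hΩo
    have hF₂a : AnalyticOnNhd ℂ F₂ Ω := hd2.analyticOnNhd hΩo
    refine hF₁a.eqOn_of_preconnected_of_eventuallyEq hF₂a hΩc
      (show (2 : ℂ) ∈ Ω by rw [hΩ]; norm_num) ?_
    have hopen : IsOpen {z : ℂ | 1 < z.re} := isOpen_lt continuous_const continuous_re
    have h2mem : (2 : ℂ) ∈ {z : ℂ | 1 < z.re} := by norm_num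
    filter_upwards [hopen.mem_nhds h2mem] with z hz
    have h := (hasSum_hterm a ha0 ha1 hz).tsum_eq
    rw [hF₁, hF₂]
    simp only []
    rw [h]
    ring
  have h0 : F₁ 0 = F₂ 0 := heq (show (0 : ℂ) ∈ Ω by rw [hΩ]; norm_num)
  rw [hF₁, hF₂] at h0
  simp only [] at h0
  rw [neg_zero, cpow_zero, cpow_zero, riemannZeta_zero] at h0
  have hterm0 : ∑' n, hterm a 0 n = 0 := by
    rw [tsum_congr (hterm_zero a), tsum_zero]
  rw [hterm0] at h0
  linear_combination h0

end HurwitzAux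

/-- For `0 < a ≤ 1` and an integer `n ≥ 0`, the Hurwitz zeta function (the analytic
continuation of `∑_{m ≥ 0} (m+a)^{-s}`) satisfies `ζ(a, -n) = -B_{n+1}(a)/(n+1)`. -/
theorem hurwitzZeta_neg_nat_eq_bernoulli (a : ℝ) (ha0 : 0 < a) (ha1 : a ≤ 1) (n : ℕ) :
    hurwitzZeta (a : UnitAddCircle) (-(n : ℂ)) =
      -(Polynomial.aeval (a : ℂ) (Polynomial.bernoulli (n + 1))) / (n + 1) := by
  cases n with
  | zero =>
    rw [Nat.cast_zero, neg_zero, HurwitzAux.hurwitzZeta_zero_eq a ha0 ha1]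
    have hB : Polynomial.aeval ((a : ℂ)) (Polynomial.bernoulli 1) = (a : ℂ) - 1 / 2 := by
      simp [Polynomial.bernoulli, Finset.sum_range_succ]
      norm_num
      ring
    rw [zero_add, hB]
    ring
  | succ m =>
    have hx : a ∈ Set.Icc (0 : ℝ) 1 := Set.mem_Icc.mpr ⟨ha0.le, ha1⟩
    rw [hurwitzZeta_neg_nat (Nat.succ_ne_zero m) hx, Polynomial.eval_map,
      ← Polynomial.aeval_def]
    push_cast
    ring
end

section
/- Let m ≥ 2 and define 𝔻_m = D_{-m}^+ ∘ D_{-m-1}^+ ∘ ... ∘ D_{-2m+2}^+ (composition of Maass raising operators D_k^+ = k + (τ-τ̄)∂_τ, with indices decreasing from -m at the outside). Then 𝔻_m(τ^{2m-1}) = (m-1)! Σ_{r=0}^{m-1} (-1)^r C(2m-1, r) τ^{2m-1-r} τ̄^r, where C(2m-1,r) is the binomial coefficient. -/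
open MvPolynomial

/-- The Maass raising operator `D_k⁺ = k + (τ - τ̄)∂_τ`, realized on polynomials in
`τ = X 0` and `τ̄ = X 1`. -/
noncomputable def Dop (k : ℤ) (P : MvPolynomial (Fin 2) ℂ) : MvPolynomial (Fin 2) ℂ :=
  (k : ℂ) • P + (X 0 - X 1) * pderiv 0 P

/-- `𝔻_{k,p} = D_k⁺ ∘ D_{k-1}⁺ ∘ ⋯ ∘ D_{k-p}⁺`. -/
noncomputable def Dcomp (k : ℤ) : ℕ → MvPolynomial (Fin 2) ℂ → MvPolynomial (Fin 2) ℂ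
  | 0 => Dop k
  | p + 1 => Dop k ∘ Dcomp (k - 1) p

open Finset

/-- The basic monomials `τ^{n-r} τ̄^r`. -/
noncomputable def Pmon (n r : ℕ) : MvPolynomial (Fin 2) ℂ := X 0 ^ (n - r) * X 1 ^ r

/-- The coefficients `(-1)^r C(n,r)`. -/
noncomputable def acoef (n r : ℕ) : ℂ := (-1 : ℂ) ^ r * (n.choose r : ℂ)

lemma Dop_smul (k : ℤ) (c : ℂ) (P : MvPolynomial (Fin 2) ℂ) :
    Dop k (c • P) = c • Dop k P := by
  simp [Dop, map_smul, mul_smul_comm, smul_add, smul_comm (k : ℂ) c]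

lemma Dop_sum (k : ℤ) (s : Finset ℕ) (f : ℕ → MvPolynomial (Fin 2) ℂ) :
    Dop k (∑ i ∈ s, f i) = ∑ i ∈ s, Dop k (f i) := by
  simp [Dop, map_sum, Finset.mul_sum, Finset.smul_sum, Finset.sum_add_distrib]

lemma Dop_pow (k : ℤ) (a b : ℕ) :
    Dop k ((X 0 : MvPolynomial (Fin 2) ℂ) ^ a * X 1 ^ b) =
      ((k : ℂ) + a) • (X 0 ^ a * X 1 ^ b) - (a : ℂ) • (X 0 ^ (a - 1) * X 1 ^ (b + 1)) := by
  rcases Nat.eq_zero_or_pos a with rfl | ha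
  · simp [Dop, pderiv_pow, pderiv_X_of_ne (show (1 : Fin 2) ≠ 0 by decide)]
  · have h0 : pderiv (0 : Fin 2) ((X 0 : MvPolynomial (Fin 2) ℂ) ^ a * X 1 ^ b)
        = (a : ℂ) • (X 0 ^ (a - 1) * X 1 ^ b) := by
      simp [pderiv_mul, pderiv_pow, pderiv_X_of_ne (show (1 : Fin 2) ≠ 0 by decide),
        mul_comm, ← Nat.cast_smul_eq_nsmul ℂ]
    have hx : (X 0 : MvPolynomial (Fin 2) ℂ) * X 0 ^ (a - 1) = X 0 ^ a := by
      conv_rhs => rw [← Nat.succ_pred_eq_of_pos ha]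
      rw [pow_succ, Nat.pred_eq_sub_one]; ring
    rw [Dop, h0]
    have h1 : (X 0 - X 1 : MvPolynomial (Fin 2) ℂ) * ((a : ℂ) • (X 0 ^ (a - 1) * X 1 ^ b)) =
        (a : ℂ) • (X 0 ^ a * X 1 ^ b) - (a : ℂ) • (X 0 ^ (a - 1) * X 1 ^ (b + 1)) := by
      rw [mul_smul_comm, ← smul_sub]
      congr 1
      rw [sub_mul]
      congr 1
      · rw [← mul_assoc, hx]
      · ring
    rw [h1]
    module

lemma Dop_Pmon (k : ℤ) (n r : ℕ) :
    Dop k (Pmon n r) = ((k : ℂ) + ((n - r : ℕ) : ℂ)) • Pmon n r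
      - (((n - r : ℕ) : ℂ)) • Pmon n (r + 1) := by
  unfold Pmon
  rw [Dop_pow]
  congr 3

lemma step (n s : ℕ) (hs : s + 1 ≤ n) :
    Dop ((s : ℤ) + 1 - n) (∑ r ∈ range (s + 1), acoef n r • Pmon n r) =
      ((s : ℂ) + 1) • ∑ r ∈ range (s + 2), acoef n r • Pmon n r := by
  have key : ∀ r ∈ range (s + 1), Dop ((s : ℤ) + 1 - n) (acoef n r • Pmon n r)
      = (acoef n r * ((s : ℂ) + 1 - r)) • Pmon n r
        - (acoef n r * ((n - r : ℕ) : ℂ)) • Pmon n (r + 1) := by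
    intro r hr
    have hrn : r < n := lt_of_lt_of_le (mem_range.1 hr) hs
    rw [Dop_smul, Dop_Pmon, smul_sub, smul_smul, smul_smul]
    congr 2
    push_cast [Nat.cast_sub hrn.le]
    ring
  rw [Dop_sum, Finset.sum_congr rfl key, Finset.sum_sub_distrib]
  have hA : (∑ r ∈ range (s + 1), (acoef n r * ((s : ℂ) + 1 - r)) • Pmon n r)
      = ∑ r ∈ range (s + 2), (acoef n r * ((s : ℂ) + 1 - r)) • Pmon n r := by
    conv_rhs => rw [Finset.sum_range_succ]
    have h0 : ((s : ℂ) + 1 - ((s + 1 : ℕ) : ℂ)) = 0 := by push_cast; ring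
    simp [h0]
  set w : ℕ → ℂ := fun r => if r = 0 then 0 else acoef n (r - 1) * ((n - (r - 1) : ℕ) : ℂ) with hw
  have hB : (∑ r ∈ range (s + 1), (acoef n r * ((n - r : ℕ) : ℂ)) • Pmon n (r + 1))
      = ∑ r ∈ range (s + 2), w r • Pmon n r := by
    conv_rhs => rw [Finset.sum_range_succ']
    simp [hw]
  rw [hA, hB, ← Finset.sum_sub_distrib, Finset.smul_sum]
  refine Finset.sum_congr rfl ?_
  intro r hr
  rw [← sub_smul, smul_smul]
  congr 1
  match r with
  | 0 => simp [hw, acoef]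
  | (t + 1) =>
    have ht : t < n := by have := mem_range.1 hr; omega
    have hc : ((n.choose (t + 1) : ℂ)) * ((t : ℂ) + 1)
        = (n.choose t : ℂ) * ((n : ℂ) - t) := by
      have h2 : ((n.choose (t + 1) * (t + 1) : ℕ) : ℂ) = ((n.choose t * (n - t) : ℕ) : ℂ) := by
        exact_mod_cast congrArg (Nat.cast : ℕ → ℂ) (Nat.choose_succ_right_eq n t)
      push_cast [Nat.cast_sub ht.le] at h2
      linear_combination h2
    simp only [hw, Nat.add_sub_cancel, if_neg (Nat.succ_ne_zero t), acoef]
    push_cast [Nat.cast_sub ht.le]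
    linear_combination ((-1 : ℂ) ^ t) * hc

lemma Dstage (m : ℕ) (hm : 2 ≤ m) : ∀ j, j ≤ m - 2 →
    Dcomp (-(2 * m : ℤ) + 2 + j) j ((X 0 : MvPolynomial (Fin 2) ℂ) ^ (2 * m - 1)) =
      ((j + 1).factorial : ℂ) • ∑ r ∈ range (j + 2), acoef (2 * m - 1) r • Pmon (2 * m - 1) r := by
  intro j
  induction j with
  | zero =>
    intro _
    show Dop _ _ = _
    have hX : ((X 0 : MvPolynomial (Fin 2) ℂ) ^ (2 * m - 1)) =
        ∑ r ∈ range (0 + 1), acoef (2 * m - 1) r • Pmon (2 * m - 1) r := by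
      simp [acoef, Pmon]
    rw [hX]
    have hk : (-(2 * m : ℤ) + 2 + ((0 : ℕ) : ℤ)) = ((0 : ℕ) : ℤ) + 1 - ((2 * m - 1 : ℕ) : ℤ) := by
      push_cast [Nat.cast_sub (show 1 ≤ 2 * m by omega)]
      ring
    rw [hk, step (2 * m - 1) 0 (by omega)]
    norm_num
  | succ j ih =>
    intro hj
    have ihj := ih (by omega)
    show Dop _ (Dcomp _ j _) = _
    have hk1 : (-(2 * m : ℤ) + 2 + ((j + 1 : ℕ) : ℤ)) - 1 = -(2 * m : ℤ) + 2 + (j : ℕ) := by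
      push_cast; ring
    rw [hk1, ihj, Dop_smul]
    have hk : (-(2 * m : ℤ) + 2 + ((j + 1 : ℕ) : ℤ))
        = ((j + 1 : ℕ) : ℤ) + 1 - ((2 * m - 1 : ℕ) : ℤ) := by
      push_cast [Nat.cast_sub (show 1 ≤ 2 * m by omega)]
      ring
    rw [hk, step (2 * m - 1) (j + 1) (by omega)]
    rw [smul_smul]
    congr 1
    push_cast [Nat.factorial_succ (j + 1)]
    ring

/-- For `m ≥ 2`, with `𝔻_m = 𝔻_{-m, m-2}`:
`𝔻_m(τ^{2m-1}) = (m-1)! ∑_{r=0}^{m-1} (-1)^r C(2m-1, r) τ^{2m-1-r} τ̄^r`. -/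
theorem Dm_apply_monomial (m : ℕ) (hm : 2 ≤ m) :
    Dcomp (-(m : ℤ)) (m - 2) ((X 0 : MvPolynomial (Fin 2) ℂ) ^ (2 * m - 1)) =
      ((m - 1).factorial : ℂ) •
        ∑ r ∈ Finset.range m,
          ((-1 : ℂ) ^ r * ((2 * m - 1).choose r : ℂ)) •
            ((X 0 : MvPolynomial (Fin 2) ℂ) ^ (2 * m - 1 - r) * (X 1) ^ r) := by
  have h := Dstage m hm (m - 2) le_rfl
  have h1 : m - 2 + 2 = m := by omega
  have h2 : m - 2 + 1 = m - 1 := by omega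
  have hk : (-(2 * m : ℤ) + 2 + ((m - 2 : ℕ) : ℤ)) = -(m : ℤ) := by
    push_cast [Nat.cast_sub hm]
    ring
  rw [h1, h2, hk] at h
  simpa only [acoef, Pmon] using h
end

section
/- With 𝔻_{k,p} = D_k^+ ∘ D_{k-1}^+ ∘ ... ∘ D_{k-p}^+ where D_j^+ = j + (τ-τ̄)∂_τ, one has for every p ≥ 0 the expansion 𝔻_{k,p} = Σ_{r=0}^{p+1} r!·C(k,r)·C(p+1, p+1-r)·(τ-τ̄)^{p+1-r} ∂_τ^{p+1-r}, as operators on smooth functions of τ on the upper half-plane, where C denotes (formal) binomial coefficients. -/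
open MvPolynomial

/-- The formal binomial coefficient `C(x, r) = x(x-1)⋯(x-r+1)/r!`. -/
noncomputable def fchoose (x : ℂ) (r : ℕ) : ℂ :=
  (∏ i ∈ Finset.range r, (x - i)) / (r.factorial : ℂ)

namespace DcompAux

/-- Falling factorial. -/
noncomputable def F (x : ℂ) (r : ℕ) : ℂ := ∏ i ∈ Finset.range r, (x - i)

/-- The coefficient. -/
noncomputable def E (x : ℂ) (n m : ℕ) : ℂ := F x (n - m) * (n.choose m : ℂ)

/-- `(τ-τ̄)^m ∂^m P`. -/
noncomputable def A (m : ℕ) (P : MvPolynomial (Fin 2) ℂ) : MvPolynomial (Fin 2) ℂ :=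
  ((X 0 : MvPolynomial (Fin 2) ℂ) - X 1) ^ m * (fun Q => pderiv (0 : Fin 2) Q)^[m] P

lemma fact_fchoose (x : ℂ) (r : ℕ) : (r.factorial : ℂ) * fchoose x r = F x r := by
  have h : (r.factorial : ℂ) ≠ 0 := Nat.cast_ne_zero.mpr r.factorial_ne_zero
  unfold fchoose F
  field_simp

lemma F_succ' (x : ℂ) (a : ℕ) : F x (a + 1) = x * F (x - 1) a := by
  rw [F, Finset.prod_range_succ']
  simp only [Nat.cast_zero, sub_zero, F]
  rw [mul_comm]
  congr 1
  refine Finset.prod_congr rfl fun i _ => ?_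
  push_cast; ring

lemma F_succ (x : ℂ) (a : ℕ) : F x (a + 1) = F x a * (x - a) := Finset.prod_range_succ _ _

lemma pderiv_w : (pderiv (0 : Fin 2)) ((X 0 : MvPolynomial (Fin 2) ℂ) - X 1) = 1 := by
  simp [pderiv_X, Pi.single_apply]

noncomputable def DopL (k : ℤ) : MvPolynomial (Fin 2) ℂ →ₗ[ℂ] MvPolynomial (Fin 2) ℂ :=
  (k : ℂ) • LinearMap.id + (LinearMap.mulLeft ℂ ((X 0 : MvPolynomial (Fin 2) ℂ) - X 1)) ∘ₗ
    (pderiv (0 : Fin 2)).toLinearMap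

lemma DopL_apply (k : ℤ) (P : MvPolynomial (Fin 2) ℂ) : DopL k P = Dop k P := rfl

lemma Dop_A (k : ℤ) (m : ℕ) (P : MvPolynomial (Fin 2) ℂ) :
    Dop k (A m P) = ((k : ℂ) + m) • A m P + A (m + 1) P := by
  have hd : (pderiv (0 : Fin 2)) (A m P) =
      (m : MvPolynomial (Fin 2) ℂ) * ((X 0 : MvPolynomial (Fin 2) ℂ) - X 1) ^ (m - 1) * (fun Q => pderiv (0 : Fin 2) Q)^[m] P
        + ((X 0 : MvPolynomial (Fin 2) ℂ) - X 1) ^ m * (fun Q => pderiv (0 : Fin 2) Q)^[m + 1] P := by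
    rw [A, Derivation.leibniz, Derivation.leibniz_pow, pderiv_w]
    rw [Function.iterate_succ_apply']
    simp only [smul_eq_mul, mul_one, nsmul_eq_mul]
    ring
  rw [Dop, hd]
  cases m with
  | zero => simp [A]
  | succ m =>
    simp only [A, Nat.add_sub_cancel, Function.iterate_succ_apply', smul_eq_C_mul, map_add, map_one, map_natCast]
    push_cast
    ring


lemma choose_key (m a : ℕ) :
    ((m + a + 1).choose (m + 1) : ℂ) * (m + 1) = ((m + a + 1).choose m : ℂ) * (a + 1) := by
  have h := Nat.choose_succ_right_eq (m + a + 1) m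
  rw [show m + a + 1 - m = a + 1 by omega] at h
  exact_mod_cast h

lemma E_rec (k : ℂ) (m p : ℕ) (h : m ≤ p) :
    E k (p + 2) (m + 1) = (k + m + 1) * E (k - 1) (p + 1) (m + 1) + E (k - 1) (p + 1) m := by
  obtain ⟨a, rfl⟩ := Nat.exists_eq_add_of_le h
  rw [E, E, E, show m + a + 2 - (m + 1) = a + 1 by omega,
    show m + a + 1 - (m + 1) = a by omega, show m + a + 1 - m = a + 1 by omega,
    F_succ' k a, F_succ (k - 1) a,
    show m + a + 2 = (m + a + 1) + 1 from rfl, Nat.choose_succ_succ (m + a + 1) m]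
  have hc := choose_key m a
  push_cast
  linear_combination (-(F (k - 1) a)) * hc

lemma E_zero (k : ℂ) (p : ℕ) : E k (p + 2) 0 = k * E (k - 1) (p + 1) 0 := by
  simp [E, F_succ' k (p + 1)]

lemma E_self (k : ℂ) (n : ℕ) : E k n n = 1 := by
  simp [E, F]

lemma key (k : ℤ) (p : ℕ) (P : MvPolynomial (Fin 2) ℂ) :
    Dcomp k p P = ∑ m ∈ Finset.range (p + 2), E (k : ℂ) (p + 1) m • A m P := by
  induction p generalizing k P with
  | zero =>
    show Dop k P = _
    rw [Finset.sum_range_succ, Finset.sum_range_one]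
    simp [Dop, A, E, F]
  | succ p ih =>
    show Dop k (Dcomp (k - 1) p P) = _
    rw [ih, ← DopL_apply, map_sum]
    simp only [map_smul, DopL_apply, Dop_A, Int.cast_sub, Int.cast_one]
    simp only [smul_add, smul_smul, Finset.sum_add_distrib]
    conv_rhs => rw [Finset.sum_range_succ' _ (p + 2), Finset.sum_range_succ _ (p + 1)]
    conv_lhs =>
      rw [Finset.sum_range_succ'
        (fun m => (E ((k : ℂ) - 1) (p + 1) m * ((k : ℂ) + m)) • A m P) (p + 1)]
      rw [Finset.sum_range_succ
        (fun m => E ((k : ℂ) - 1) (p + 1) m • A (m + 1) P) (p + 1)]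
    push_cast
    simp only [show p + 1 + 1 = p + 2 from rfl]
    have emid : ∀ m ∈ Finset.range (p + 1),
        (E ((k : ℂ) - 1) (p + 1) (m + 1) * ((k : ℂ) + (↑m + 1))) • A (m + 1) P
          + E ((k : ℂ) - 1) (p + 1) m • A (m + 1) P
          = E ((k : ℂ)) (p + 2) (m + 1) • A (m + 1) P := by
      intro m hm
      rw [← add_smul, E_rec _ m p (by simpa using Nat.lt_succ_iff.mp (Finset.mem_range.mp hm))]
      congr 1
      ring
    have hsum : ∑ x ∈ Finset.range (p + 1), E ((k : ℂ)) (p + 2) (x + 1) • A (x + 1) P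
        = ∑ x ∈ Finset.range (p + 1),
            (E ((k : ℂ) - 1) (p + 1) (x + 1) * ((k : ℂ) + (↑x + 1))) • A (x + 1) P
          + ∑ x ∈ Finset.range (p + 1), E ((k : ℂ) - 1) (p + 1) x • A (x + 1) P := by
      rw [← Finset.sum_add_distrib]
      exact (Finset.sum_congr rfl emid).symm
    rw [hsum, E_zero, E_self, E_self,
      show ((k : ℂ) * E ((k : ℂ) - 1) (p + 1) 0) = E ((k : ℂ) - 1) (p + 1) 0 * ((k : ℂ) + 0) from
        by ring]
    abel

end DcompAux

open DcompAux in
/-- `𝔻_{k,p} = ∑_{r=0}^{p+1} r! C(k,r) C(p+1, p+1-r) (τ-τ̄)^{p+1-r} ∂_τ^{p+1-r}`. -/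
theorem Dcomp_expansion (k : ℤ) (p : ℕ) (P : MvPolynomial (Fin 2) ℂ) :
    Dcomp k p P =
      ∑ r ∈ Finset.range (p + 2),
        ((r.factorial : ℂ) * fchoose (k : ℂ) r * ((p + 1).choose (p + 1 - r) : ℂ)) •
          (((X 0 : MvPolynomial (Fin 2) ℂ) - X 1) ^ (p + 1 - r) *
            (fun Q => pderiv (0 : Fin 2) Q)^[p + 1 - r] P) := by
  rw [key, ← Finset.sum_range_reflect]
  refine Finset.sum_congr rfl fun m hm => ?_
  have hm' : m ≤ p + 1 := Nat.lt_succ_iff.mp (Finset.mem_range.mp hm)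
  rw [show p + 2 - 1 - m = p + 1 - m by omega, A, E,
    show p + 1 - (p + 1 - m) = m by omega]
  congr 1
  rw [← fact_fchoose (k : ℂ) m]
end
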